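/- (Theorem 3.1, Poisson approximation) Let X₁, X₂, … be an infinite sequence of independent random points, each uniformly distributed on the unit sphere S² ⊂ ℝ³. Fix c > 0 and α > 2, and for each N ≥ 2 with c/N^α < 1 set p_N = c/N^α and a_N = 2·arcsin(√p_N). Let |𝓔_N| be the number of edges of the random intersection graph G_N on vertex set {1,…,N} built from X₁,…,X_N with caps of angular radius a_N, and let λ_N = E[|𝓔_N|] = 2N(N−1)p_N(1−p_N). Then the total variation distance between the distribution of |𝓔_N| and the Poisson distribution with parameter λ_N tends to 0 as N → ∞; concretely, ∑_{k=0}^{∞} | P[|𝓔_N| = k] − e^{−λ_N} λ_N^k / k! | → 0 as N → ∞. -/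

import Mathlib

open MeasureTheory Real Set
open scoped ENNReal RealInnerProductSpace

/-- The unit sphere `S²` in `ℝ³`. -/
noncomputable def S2 : Set (EuclideanSpace ℝ (Fin 3)) :=
  Metric.sphere (0 : EuclideanSpace ℝ (Fin 3)) 1

/-- The uniform probability measure on the unit sphere `S² ⊂ ℝ³`: the rotation-invariant
surface (2-dimensional Hausdorff) measure restricted to the sphere, normalized by the total
surface area `4π`. -/
noncomputable def sphereUniform : Measure (EuclideanSpace ℝ (Fin 3)) :=
  (ENNReal.ofReal (4 * π))⁻¹ •
    (μH[2] : Measure (EuclideanSpace ℝ (Fin 3))).restrict S2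

/-- The angular distance `θ(x,y) = arccos ⟪x,y⟫` between two points of the sphere. -/
noncomputable def angDist (x y : EuclideanSpace ℝ (Fin 3)) : ℝ :=
  Real.arccos ⟪x, y⟫

lemma normalize_two_lip {E : Type*} [NormedAddCommGroup E] [InnerProductSpace ℝ E]
    (a b : E) (ha : 1 ≤ ‖a‖) (hb : 1 ≤ ‖b‖) :
    ‖‖a‖⁻¹ • a - ‖b‖⁻¹ • b‖ ≤ 2 * ‖a - b‖ := by
  have ha0 : (0:ℝ) < ‖a‖ := lt_of_lt_of_le one_pos ha
  have hb0 : (0:ℝ) < ‖b‖ := lt_of_lt_of_le one_pos hb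
  have key : ‖a‖⁻¹ • a - ‖b‖⁻¹ • b = ‖a‖⁻¹ • (a - b) + (‖a‖⁻¹ - ‖b‖⁻¹) • b := by
    rw [smul_sub, sub_smul]; abel
  rw [key]
  have h1 : ‖‖a‖⁻¹ • (a - b)‖ ≤ ‖a - b‖ := by
    rw [norm_smul, norm_inv, norm_norm]
    calc ‖a‖⁻¹ * ‖a - b‖ ≤ 1 * ‖a - b‖ := by
          apply mul_le_mul_of_nonneg_right _ (norm_nonneg _)
          rw [inv_le_one_iff₀]; right; exact ha
      _ = ‖a - b‖ := one_mul _
  have h2 : ‖(‖a‖⁻¹ - ‖b‖⁻¹) • b‖ ≤ ‖a - b‖ := by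
    rw [norm_smul, norm_sub_rev, Real.norm_eq_abs]
    have : |‖b‖⁻¹ - ‖a‖⁻¹| = |‖a‖ - ‖b‖| / (‖a‖ * ‖b‖) := by
      rw [inv_sub_inv (ne_of_gt hb0) (ne_of_gt ha0), abs_div]
      rw [abs_of_pos (mul_pos hb0 ha0)]
      rw [mul_comm ‖b‖ ‖a‖]
    rw [this]
    have habs : |‖a‖ - ‖b‖| ≤ ‖a - b‖ := abs_norm_sub_norm_le a b
    rw [div_mul_eq_mul_div]
    rw [div_le_iff₀ (mul_pos ha0 hb0)]
    calc |‖a‖ - ‖b‖| * ‖b‖ ≤ ‖a - b‖ * ‖b‖ :=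
          mul_le_mul_of_nonneg_right habs (norm_nonneg _)
      _ ≤ ‖a - b‖ * (‖a‖ * ‖b‖) := by
          apply mul_le_mul_of_nonneg_left _ (norm_nonneg _)
          nlinarith
  calc ‖‖a‖⁻¹ • (a - b) + (‖a‖⁻¹ - ‖b‖⁻¹) • b‖
      ≤ ‖‖a‖⁻¹ • (a - b)‖ + ‖(‖a‖⁻¹ - ‖b‖⁻¹) • b‖ := norm_add_le _ _
    _ ≤ 2 * ‖a - b‖ := by linarith

lemma icc_cover {R : ℝ} (hR : 0 < R) (n : ℕ) (hn : 1 ≤ n) {s : ℝ} (hs : s ∈ Icc (-R) R) :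
    ∃ i : Fin n, s ∈ Icc (-R + i * (2*R/n)) (-R + i * (2*R/n) + 2*R/n) := by
  obtain ⟨hs1, hs2⟩ := hs
  have hn0 : (0:ℝ) < n := by exact_mod_cast hn
  set δ : ℝ := 2*R/n with hδ
  have hδ0 : 0 < δ := by positivity
  have hsR : 0 ≤ s + R := by linarith
  set k : ℕ := ⌊(s+R)/δ⌋₊ with hk
  refine ⟨⟨min k (n-1), by omega⟩, ?_, ?_⟩
  · -- lower bound
    rcases le_or_gt k (n-1) with h | h
    · have : (k:ℝ) ≤ (s+R)/δ := Nat.floor_le (by positivity)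
      have : (k:ℝ) * δ ≤ s + R := by
        rw [← le_div_iff₀ hδ0]; exact this
      simp only [min_eq_left h]
      linarith
    · have hkn : n ≤ k := by omega
      have : (n:ℝ) ≤ (s+R)/δ := by
        calc (n:ℝ) ≤ (k:ℝ) := by exact_mod_cast hkn
          _ ≤ (s+R)/δ := Nat.floor_le (by positivity)
      have h2 : (n:ℝ) * δ ≤ s + R := by rw [← le_div_iff₀ hδ0]; exact this
      have hcast : ((min k (n-1) : ℕ) : ℝ) = (n:ℝ) - 1 := by
        rw [min_eq_right (by omega : n-1 ≤ k)]
        push_cast [Nat.cast_sub hn]; ring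
      rw [hcast]
      nlinarith
  · -- upper bound
    rcases le_or_gt k (n-1) with h | h
    · have : (s+R)/δ < (k:ℝ) + 1 := Nat.lt_floor_add_one _
      have h2 : s + R < ((k:ℝ)+1) * δ := by
        rw [← div_lt_iff₀ hδ0]; exact this
      simp only [min_eq_left h]
      nlinarith
    · have hcast : ((min k (n-1) : ℕ) : ℝ) = (n:ℝ) - 1 := by
        rw [min_eq_right (by omega : n-1 ≤ k)]
        push_cast [Nat.cast_sub hn]; ring
      rw [hcast]
      have : ((n:ℝ)-1) * δ + δ = (n:ℝ) * δ := by ring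
      have hnd : (n:ℝ) * δ = 2*R := by
        rw [hδ]; field_simp
      nlinarith

set_option maxHeartbeats 2000000 in
lemma cap_hausdorff_bound (x : EuclideanSpace ℝ (Fin 3)) (hx : ‖x‖ = 1)
    {r : ℝ} (hr0 : 0 < r) (hr : r ≤ π/4) :
    μH[2] (S2 ∩ {y | Real.arccos ⟪x, y⟫ ≤ r}) ≤ ENNReal.ofReal (256 * r^2) := by
  have hx0 : x ≠ 0 := by intro h; rw [h, norm_zero] at hx; norm_num at hx
  haveI : Fact (Module.finrank ℝ (EuclideanSpace ℝ (Fin 3)) = 2 + 1) :=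
    ⟨by simp [finrank_euclideanSpace_fin]⟩
  set K := (Submodule.span ℝ {x})ᗮ with hKdef
  have hK : Module.finrank ℝ K = 2 := Submodule.finrank_orthogonal_span_singleton hx0
  set b := (stdOrthonormalBasis ℝ K).reindex (finCongr hK) with hb
  set u : EuclideanSpace ℝ (Fin 3) := ((b 0 : K) : EuclideanSpace ℝ (Fin 3)) with hu_def
  set v : EuclideanSpace ℝ (Fin 3) := ((b 1 : K) : EuclideanSpace ℝ (Fin 3)) with hv_def
  have hu : ‖u‖ = 1 := by
    have := b.orthonormal.1 0
    exact this
  have hv : ‖v‖ = 1 := by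
    have := b.orthonormal.1 1
    exact this
  have huv : ⟪u, v⟫ = 0 := by
    have h := b.orthonormal.2 (show (0 : Fin 2) ≠ 1 by decide)
    simp only at h
    rw [hu_def, hv_def, ← Submodule.coe_inner]
    exact h
  have hxu : ⟪x, u⟫ = 0 := by
    have hm : u ∈ (Submodule.span ℝ {x})ᗮ := (b 0).2
    exact (Submodule.mem_orthogonal_singleton_iff_inner_right).1 hm
  have hxv : ⟪x, v⟫ = 0 := by
    have hm : v ∈ (Submodule.span ℝ {x})ᗮ := (b 1).2
    exact (Submodule.mem_orthogonal_singleton_iff_inner_right).1 hm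
  have hux : ⟪u, x⟫ = 0 := by rw [real_inner_comm]; exact hxu
  have hvx : ⟪v, x⟫ = 0 := by rw [real_inner_comm]; exact hxv
  have hvu : ⟪v, u⟫ = 0 := by rw [real_inner_comm]; exact huv
  have hxx : ⟪x, x⟫ = 1 := by rw [real_inner_self_eq_norm_sq, hx]; norm_num
  have huu : ⟪u, u⟫ = 1 := by rw [real_inner_self_eq_norm_sq, hu]; norm_num
  have hvv : ⟪v, v⟫ = 1 := by rw [real_inner_self_eq_norm_sq, hv]; norm_num
  -- the parametrization
  set G : ℝ × ℝ → EuclideanSpace ℝ (Fin 3) :=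
    fun p => ‖x + p.1 • u + p.2 • v‖⁻¹ • (x + p.1 • u + p.2 • v) with hG
  have hznorm : ∀ p : ℝ × ℝ, ‖x + p.1 • u + p.2 • v‖^2 = 1 + p.1^2 + p.2^2 := by
    intro p
    rw [← real_inner_self_eq_norm_sq]
    simp only [inner_add_left, inner_add_right, inner_smul_left, inner_smul_right,
      hxx, huu, hvv, hxu, hxv, hux, hvx, huv, hvu, starRingEnd_apply, star_trivial]
    ring
  have hz1 : ∀ p : ℝ × ℝ, 1 ≤ ‖x + p.1 • u + p.2 • v‖ := by
    intro p
    nlinarith [hznorm p, norm_nonneg (x + p.1 • u + p.2 • v), sq_nonneg p.1, sq_nonneg p.2]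
  have hGlip : ∀ p q : ℝ × ℝ, ‖G p - G q‖ ≤ 2 * (|p.1 - q.1| + |p.2 - q.2|) := by
    intro p q
    have h1 := normalize_two_lip _ _ (hz1 p) (hz1 q)
    have h2 : ‖(x + p.1 • u + p.2 • v) - (x + q.1 • u + q.2 • v)‖
        ≤ |p.1 - q.1| + |p.2 - q.2| := by
      have he : (x + p.1 • u + p.2 • v) - (x + q.1 • u + q.2 • v)
          = (p.1 - q.1) • u + (p.2 - q.2) • v := by module
      rw [he]
      calc ‖(p.1 - q.1) • u + (p.2 - q.2) • v‖
          ≤ ‖(p.1 - q.1) • u‖ + ‖(p.2 - q.2) • v‖ := norm_add_le _ _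
        _ = |p.1 - q.1| + |p.2 - q.2| := by
            rw [norm_smul, norm_smul, hu, hv, Real.norm_eq_abs, Real.norm_eq_abs]
            ring
    calc ‖G p - G q‖ ≤ 2 * ‖(x + p.1 • u + p.2 • v) - (x + q.1 • u + q.2 • v)‖ := h1
      _ ≤ 2 * (|p.1 - q.1| + |p.2 - q.2|) := by linarith
  set R : ℝ := 2 * r with hR
  have hRpos : 0 < R := by positivity
  have hsqrt2 : Real.sqrt 2 ≤ 2 := by
    nlinarith [Real.sq_sqrt (by norm_num : (0:ℝ) ≤ 2), Real.sqrt_nonneg 2]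
  have hT : S2 ∩ {y | Real.arccos ⟪x, y⟫ ≤ r} ⊆ G '' (Icc (-R) R ×ˢ Icc (-R) R) := by
    rintro y ⟨hyS, hyr⟩
    have hy1 : ‖y‖ = 1 := by
      rwa [S2, mem_sphere_zero_iff_norm] at hyS
    set c : ℝ := ⟪x, y⟫ with hc
    have habs : |c| ≤ 1 := by
      have := abs_real_inner_le_norm x y
      rwa [hx, hy1, one_mul] at this
    have hc1 : -1 ≤ c := (abs_le.1 habs).1
    have hc2 : c ≤ 1 := (abs_le.1 habs).2
    have hpi : r ≤ π := le_trans hr (by linarith [Real.pi_pos])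
    have hcr : Real.cos r ≤ c := by
      have h1 : Real.cos r ≤ Real.cos (Real.arccos c) :=
        Real.cos_le_cos_of_nonneg_of_le_pi (Real.arccos_nonneg c) hpi hyr
      rwa [Real.cos_arccos hc1 hc2] at h1
    have hc0 : Real.sqrt 2 / 2 ≤ c := by
      have h1 : Real.cos (π/4) ≤ Real.cos r :=
        Real.cos_le_cos_of_nonneg_of_le_pi (le_of_lt hr0) (by linarith [Real.pi_pos]) hr
      rw [Real.cos_pi_div_four] at h1
      linarith
    have hs2pos : (0:ℝ) < Real.sqrt 2 / 2 := by positivity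
    have hcpos : 0 < c := lt_of_lt_of_le hs2pos hc0
    set w : EuclideanSpace ℝ (Fin 3) := y - c • x with hw
    have hxw : ⟪x, w⟫ = 0 := by
      rw [hw, inner_sub_right, inner_smul_right, hxx]
      simp [hc]
    have hwK : w ∈ (Submodule.span ℝ {x})ᗮ :=
      (Submodule.mem_orthogonal_singleton_iff_inner_right).2 hxw
    have hw2 : ‖w‖^2 = 1 - c^2 := by
      have hyx : ⟪y, x⟫ = c := by rw [real_inner_comm]
      rw [hw, @norm_sub_sq_real, inner_smul_right, hyx, norm_smul, hy1, hx,
        Real.norm_eq_abs, mul_one, sq_abs]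
      ring
    have hwle : ‖w‖ ≤ r := by
      have h1 : ‖w‖ = Real.sin (Real.arccos c) := by
        rw [Real.sin_arccos, ← hw2, Real.sqrt_sq (norm_nonneg _)]
      rw [h1]
      calc Real.sin (Real.arccos c) ≤ Real.arccos c := Real.sin_le (Real.arccos_nonneg c)
        _ ≤ r := hyr
    set s : ℝ := ⟪u, w⟫ with hs
    set t : ℝ := ⟪v, w⟫ with ht
    have hrepr : w = s • u + t • v := by
      have h := congrArg (Subtype.val) (b.sum_repr ⟨w, hwK⟩)
      rw [Fin.sum_univ_two] at h
      simp only [OrthonormalBasis.repr_apply_apply] at h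
      rw [Submodule.coe_add, Submodule.coe_smul, Submodule.coe_smul] at h
      have h0 : inner (𝕜 := ℝ) (b 0) (⟨w, hwK⟩ : K) = s := by
        rw [Submodule.coe_inner]
      have h1 : inner (𝕜 := ℝ) (b 1) (⟨w, hwK⟩ : K) = t := by
        rw [Submodule.coe_inner]
      rw [h0, h1] at h
      exact h.symm
    have hss : |s| ≤ r := by
      calc |s| ≤ ‖u‖ * ‖w‖ := abs_real_inner_le_norm u w
        _ = ‖w‖ := by rw [hu, one_mul]
        _ ≤ r := hwle
    have htt : |t| ≤ r := by
      calc |t| ≤ ‖v‖ * ‖w‖ := abs_real_inner_le_norm v w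
        _ = ‖w‖ := by rw [hv, one_mul]
        _ ≤ r := hwle
    have hcinv : c⁻¹ ≤ Real.sqrt 2 := by
      rw [inv_eq_one_div, div_le_iff₀ hcpos]
      nlinarith [Real.sq_sqrt (by norm_num : (0:ℝ) ≤ 2), hc0, Real.sqrt_nonneg 2]
    have hbound : ∀ e : ℝ, |e| ≤ r → |c⁻¹ * e| ≤ R := by
      intro e he
      rw [abs_mul, abs_of_pos (inv_pos.2 hcpos)]
      calc c⁻¹ * |e| ≤ Real.sqrt 2 * r := by
            apply mul_le_mul hcinv he (abs_nonneg e) (Real.sqrt_nonneg 2)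
        _ ≤ 2 * r := by nlinarith
    refine ⟨(c⁻¹ * s, c⁻¹ * t), ⟨abs_le.1 (hbound s hss), abs_le.1 (hbound t htt)⟩, ?_⟩
    -- show G (c⁻¹ s, c⁻¹ t) = y
    have hzy : x + (c⁻¹ * s) • u + (c⁻¹ * t) • v = c⁻¹ • y := by
      have hy_eq : y = c • x + w := by rw [hw]; abel
      rw [hy_eq, hrepr, smul_add, smul_smul, inv_mul_cancel₀ (ne_of_gt hcpos), one_smul,
        smul_add, smul_smul, smul_smul]
      abel
    show ‖x + (c⁻¹ * s) • u + (c⁻¹ * t) • v‖⁻¹ • (x + (c⁻¹ * s) • u + (c⁻¹ * t) • v) = y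
    rw [hzy, norm_smul, Real.norm_eq_abs, abs_of_pos (inv_pos.2 hcpos), hy1, mul_one,
      inv_inv, smul_smul, mul_inv_cancel₀ (ne_of_gt hcpos), one_smul]
  -- covering by small squares
  set T := S2 ∩ {y | Real.arccos ⟪x, y⟫ ≤ r} with hTdef
  set t : (n : ℕ) → Fin n × Fin n → Set (EuclideanSpace ℝ (Fin 3)) :=
    fun n ij => G '' (Icc (-R + ij.1 * (2*R/n)) (-R + ij.1 * (2*R/n) + 2*R/n) ×ˢ
      Icc (-R + ij.2 * (2*R/n)) (-R + ij.2 * (2*R/n) + 2*R/n)) with htdef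
  have hrad : Filter.Tendsto (fun n : ℕ => ENNReal.ofReal (8*R/n)) Filter.atTop (nhds 0) := by
    rw [show (0:ℝ≥0∞) = ENNReal.ofReal 0 by simp]
    exact ENNReal.tendsto_ofReal (tendsto_const_div_atTop_nhds_zero_nat (8*R))
  have ht : ∀ᶠ n in Filter.atTop, ∀ ij : Fin n × Fin n,
      EMetric.diam (t n ij) ≤ ENNReal.ofReal (8*R/n) := by
    filter_upwards [Filter.eventually_ge_atTop 1] with n hn ij
    apply EMetric.diam_le
    rintro y1 ⟨p, hp, rfl⟩ y2 ⟨q, hq, rfl⟩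
    rw [edist_dist, dist_eq_norm]
    apply ENNReal.ofReal_le_ofReal
    have hn0 : (0:ℝ) < n := by exact_mod_cast hn
    have h1 : |p.1 - q.1| ≤ 2*R/n := by
      have hp1 := hp.1; have hq1 := hq.1
      rw [abs_sub_le_iff]
      constructor <;> [linarith [hp1.1, hp1.2, hq1.1, hq1.2]; linarith [hp1.1, hp1.2, hq1.1, hq1.2]]
    have h2 : |p.2 - q.2| ≤ 2*R/n := by
      have hp2 := hp.2; have hq2 := hq.2
      rw [abs_sub_le_iff]
      constructor <;> [linarith [hp2.1, hp2.2, hq2.1, hq2.2]; linarith [hp2.1, hp2.2, hq2.1, hq2.2]]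
    calc ‖G p - G q‖ ≤ 2 * (|p.1 - q.1| + |p.2 - q.2|) := hGlip p q
      _ ≤ 2 * (2*R/n + 2*R/n) := by linarith
      _ = 8*R/n := by ring
  have hst : ∀ᶠ n in Filter.atTop, T ⊆ ⋃ ij : Fin n × Fin n, t n ij := by
    filter_upwards [Filter.eventually_ge_atTop 1] with n hn
    intro y hy
    obtain ⟨p, hp, rfl⟩ := hT hy
    obtain ⟨i, hi⟩ := icc_cover hRpos n hn (Set.mem_prod.1 hp).1
    obtain ⟨j, hj⟩ := icc_cover hRpos n hn (Set.mem_prod.1 hp).2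
    exact Set.mem_iUnion.2 ⟨(i,j), ⟨p, Set.mem_prod.2 ⟨hi, hj⟩, rfl⟩⟩
  have hmain := MeasureTheory.Measure.hausdorffMeasure_le_liminf_sum 2 T
      (fun n : ℕ => ENNReal.ofReal (8*R/n)) hrad t ht hst
  refine le_trans hmain ?_
  have hbnd : ∀ᶠ n : ℕ in Filter.atTop,
      (∑ ij : Fin n × Fin n, EMetric.diam (t n ij) ^ (2:ℝ)) ≤ ENNReal.ofReal (256 * r^2) := by
    filter_upwards [Filter.eventually_ge_atTop 1, ht] with n hn hdiam
    have hn0 : (0:ℝ) < n := by exact_mod_cast hn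
    have step1 : ∑ ij : Fin n × Fin n, EMetric.diam (t n ij) ^ (2:ℝ)
        ≤ ∑ _ij : Fin n × Fin n, (ENNReal.ofReal (8*R/n)) ^ (2:ℝ) :=
      Finset.sum_le_sum fun ij _ => ENNReal.rpow_le_rpow (hdiam ij) (by norm_num)
    refine le_trans step1 ?_
    rw [Finset.sum_const, Finset.card_univ, Fintype.card_prod, Fintype.card_fin]
    rw [nsmul_eq_mul]
    rw [ENNReal.ofReal_rpow_of_nonneg (by positivity) (by norm_num)]
    rw [show ((n*n : ℕ) : ℝ≥0∞) = ENNReal.ofReal ((n:ℝ)*(n:ℝ)) by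
      rw [← ENNReal.ofReal_natCast]; push_cast; ring_nf]
    rw [← ENNReal.ofReal_mul (by positivity)]
    apply ENNReal.ofReal_le_ofReal
    have : (8*R/(n:ℝ)) ^ (2:ℝ) = (8*R/(n:ℝ))^(2:ℕ) := by
      rw [← Real.rpow_natCast]; norm_num
    rw [this]
    have heq : (n:ℝ)*(n:ℝ) * (8*R/(n:ℝ))^(2:ℕ) = 64 * R^2 := by
      field_simp
      ring
    rw [heq, hR]
    nlinarith [sq_nonneg r]
  calc Filter.liminf (fun n : ℕ => ∑ ij : Fin n × Fin n, EMetric.diam (t n ij) ^ (2:ℝ))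
        Filter.atTop
      ≤ Filter.liminf (fun _ : ℕ => ENNReal.ofReal (256 * r^2)) Filter.atTop :=
        Filter.liminf_le_liminf hbnd
    _ = ENNReal.ofReal (256 * r^2) := Filter.liminf_const _

lemma S2_measurable : MeasurableSet S2 := Metric.isClosed_sphere.measurableSet

lemma sphereUniform_compl_S2 : sphereUniform S2ᶜ = 0 := by
  rw [sphereUniform, Measure.smul_apply, Measure.restrict_apply S2_measurable.compl]
  simp

lemma cap_measurable (x : EuclideanSpace ℝ (Fin 3)) (r : ℝ) :
    MeasurableSet {y : EuclideanSpace ℝ (Fin 3) | Real.arccos ⟪x, y⟫ ≤ r} := by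
  have hcont : Continuous fun y : EuclideanSpace ℝ (Fin 3) => Real.arccos ⟪x, y⟫ :=
    Real.continuous_arccos.comp (continuous_const.inner continuous_id)
  exact (isClosed_le hcont continuous_const).measurableSet

lemma sphereUniform_cap_le (x : EuclideanSpace ℝ (Fin 3)) (hx : x ∈ S2)
    {r : ℝ} (hr0 : 0 < r) (hr : r ≤ π/4) :
    sphereUniform {y | Real.arccos ⟪x, y⟫ ≤ r} ≤ ENNReal.ofReal (256 * r^2) := by
  have hx1 : ‖x‖ = 1 := by rwa [S2, mem_sphere_zero_iff_norm] at hx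
  rw [sphereUniform, Measure.smul_apply, Measure.restrict_apply (cap_measurable x r)]
  have h1 : μH[2] ({y : EuclideanSpace ℝ (Fin 3) | Real.arccos ⟪x, y⟫ ≤ r} ∩ S2)
      ≤ ENNReal.ofReal (256 * r^2) := by
    rw [Set.inter_comm]
    exact cap_hausdorff_bound x hx1 hr0 hr
  have h2 : (ENNReal.ofReal (4 * π))⁻¹ ≤ 1 := by
    rw [ENNReal.inv_le_one]
    rw [show (1:ℝ≥0∞) = ENNReal.ofReal 1 by simp]
    apply ENNReal.ofReal_le_ofReal
    linarith [Real.pi_gt_three]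
  calc (ENNReal.ofReal (4 * π))⁻¹ • μH[2] ({y | Real.arccos ⟪x, y⟫ ≤ r} ∩ S2)
      ≤ 1 * ENNReal.ofReal (256 * r^2) := by
        rw [smul_eq_mul]
        exact mul_le_mul' h2 h1
    _ = ENNReal.ofReal (256 * r^2) := one_mul _

lemma pair_prob_bound {Ω : Type*} [MeasurableSpace Ω] (P : Measure Ω) [IsProbabilityMeasure P]
    (Xi Xj : Ω → EuclideanSpace ℝ (Fin 3)) (hXi : Measurable Xi) (hXj : Measurable Xj)
    (hdi : Measure.map Xi P = sphereUniform) (hdj : Measure.map Xj P = sphereUniform)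
    (hind : ProbabilityTheory.IndepFun Xi Xj P)
    {r : ℝ} (hr0 : 0 < r) (hr : r ≤ π/4) :
    P {ω | Real.arccos ⟪Xi ω, Xj ω⟫ ≤ r} ≤ ENNReal.ofReal (256 * r^2) := by
  haveI hprob : IsProbabilityMeasure sphereUniform := by
    rw [← hdi]; exact Measure.isProbabilityMeasure_map hXi.aemeasurable
  set B : Set (EuclideanSpace ℝ (Fin 3) × EuclideanSpace ℝ (Fin 3)) :=
    {z | Real.arccos ⟪z.1, z.2⟫ ≤ r} with hB
  have hBmeas : MeasurableSet B := by
    have hcont : Continuous fun z : EuclideanSpace ℝ (Fin 3) × EuclideanSpace ℝ (Fin 3) =>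
        Real.arccos ⟪z.1, z.2⟫ :=
      Real.continuous_arccos.comp continuous_inner
    exact (isClosed_le hcont continuous_const).measurableSet
  have hmap : Measure.map (fun ω => (Xi ω, Xj ω)) P = sphereUniform.prod sphereUniform := by
    have h := (ProbabilityTheory.indepFun_iff_map_prod_eq_prod_map_map
      hXi.aemeasurable hXj.aemeasurable).1 hind
    rw [hdi, hdj] at h
    exact h
  have hev : {ω | Real.arccos ⟪Xi ω, Xj ω⟫ ≤ r} = (fun ω => (Xi ω, Xj ω)) ⁻¹' B := rfl
  rw [hev, ← Measure.map_apply (hXi.prodMk hXj) hBmeas, hmap]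
  rw [Measure.prod_apply hBmeas]
  have hsec : ∀ x : EuclideanSpace ℝ (Fin 3),
      Prod.mk x ⁻¹' B = {y | Real.arccos ⟪x, y⟫ ≤ r} := fun x => rfl
  have hae : ∀ᵐ x ∂sphereUniform, x ∈ S2 := by
    rw [MeasureTheory.ae_iff]
    have : {x | ¬ x ∈ S2} = S2ᶜ := rfl
    rw [this]
    exact sphereUniform_compl_S2
  calc ∫⁻ x, sphereUniform (Prod.mk x ⁻¹' B) ∂sphereUniform
      ≤ ∫⁻ _, ENNReal.ofReal (256 * r^2) ∂sphereUniform := by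
        apply lintegral_mono_ae
        filter_upwards [hae] with x hx
        rw [hsec x]
        exact sphereUniform_cap_le x hx hr0 hr
    _ = ENNReal.ofReal (256 * r^2) := by
        rw [lintegral_const, measure_univ, mul_one]

set_option maxHeartbeats 1000000 in
lemma tv_bound_one_N {Ω : Type*} [MeasurableSpace Ω] (P : Measure Ω) [IsProbabilityMeasure P]
    (F : Ω → ℕ) (hF : Measurable F) (lam : ℝ) (hlam : 0 ≤ lam) :
    ∑' k : ℕ, |(P {ω | F ω = k}).toReal - Real.exp (-lam) * lam^k / (k.factorial : ℝ)|
      ≤ 2 * (P {ω | F ω ≠ 0}).toReal + 2 * lam := by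
  classical
  set po : ℕ → ℝ := fun k => Real.exp (-lam) * lam^k / (k.factorial : ℝ) with hpo
  set g : ℕ → ℝ := fun k => (P {ω | F ω = k}).toReal with hg
  have hexp_pos : (0:ℝ) < Real.exp (-lam) := Real.exp_pos _
  have hpo_nonneg : ∀ k, 0 ≤ po k := by
    intro k
    apply div_nonneg (mul_nonneg (le_of_lt hexp_pos) (pow_nonneg hlam k))
    positivity
  have hpow_summable : Summable (fun k : ℕ => lam^k / (k.factorial : ℝ)) :=
    Real.summable_pow_div_factorial lam
  have hpo_summable : Summable po := by
    have := hpow_summable.mul_left (Real.exp (-lam))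
    apply this.congr
    intro k
    rw [hpo]
    ring
  have hg_nonneg : ∀ k, 0 ≤ g k := fun k => ENNReal.toReal_nonneg
  have hAmeas : ∀ k : ℕ, MeasurableSet {ω | F ω = k} := by
    intro k
    exact hF (measurableSet_singleton k)
  have hNmeas : MeasurableSet {ω | F ω ≠ 0} := (hAmeas 0).compl
  have hfin : ∀ s : Set Ω, P s ≠ ∞ := fun s => measure_ne_top P s
  -- partial sums of g
  have hdisj : ∀ n : ℕ, (↑(Finset.range n) : Set ℕ).PairwiseDisjoint
      (fun k => {ω | F ω = k}) := by
    intro n a _ b _ hab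
    simp only [Function.onFun]
    rw [Set.disjoint_left]
    rintro ω h1 h2
    exact hab (h1.symm.trans h2)
  have hgsum : ∀ n : ℕ, ∑ k ∈ Finset.range n, g k ≤ 1 := by
    intro n
    have h1 : ∑ k ∈ Finset.range n, P {ω | F ω = k} ≤ 1 := by
      rw [← measure_biUnion_finset (hdisj n) (fun k _ => hAmeas k)]
      exact prob_le_one
    have h2 : (∑ k ∈ Finset.range n, P {ω | F ω = k}).toReal
        = ∑ k ∈ Finset.range n, g k := by
      rw [ENNReal.toReal_sum (fun k _ => hfin _)]
    rw [← h2]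
    calc (∑ k ∈ Finset.range n, P {ω | F ω = k}).toReal
        ≤ (1 : ℝ≥0∞).toReal := ENNReal.toReal_mono ENNReal.one_ne_top h1
      _ = 1 := by simp
  have hg_summable : Summable g := summable_of_sum_range_le hg_nonneg hgsum
  have hgtail : ∀ n : ℕ, ∑ k ∈ Finset.range n, g (k+1) ≤ (P {ω | F ω ≠ 0}).toReal := by
    intro n
    have hsub : (⋃ k ∈ Finset.range n, {ω | F ω = k + 1}) ⊆ {ω | F ω ≠ 0} := by
      intro ω hω
      simp only [Set.mem_iUnion] at hω
      obtain ⟨k, _, hk⟩ := hω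
      simp only [Set.mem_setOf_eq] at hk ⊢
      omega
    have hdisj' : (↑(Finset.range n) : Set ℕ).PairwiseDisjoint
        (fun k => {ω | F ω = k + 1}) := by
      intro a _ b _ hab
      simp only [Function.onFun]
      rw [Set.disjoint_left]
      rintro ω h1 h2
      simp only [Set.mem_setOf_eq] at h1 h2
      omega
    have h1 : ∑ k ∈ Finset.range n, P {ω | F ω = k + 1} ≤ P {ω | F ω ≠ 0} := by
      rw [← measure_biUnion_finset hdisj' (fun k _ => hAmeas (k+1))]
      exact measure_mono hsub
    have h2 : (∑ k ∈ Finset.range n, P {ω | F ω = k+1}).toReal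
        = ∑ k ∈ Finset.range n, g (k+1) := ENNReal.toReal_sum (fun k _ => hfin _)
    rw [← h2]
    exact ENNReal.toReal_mono (hfin _) h1
  have hg_tail_summable : Summable (fun k => g (k+1)) :=
    (summable_nat_add_iff 1).2 hg_summable
  have hgtail' : ∑' k : ℕ, g (k+1) ≤ (P {ω | F ω ≠ 0}).toReal :=
    hg_tail_summable.tsum_le_of_sum_range_le hgtail
  -- Poisson tail
  have hexp_tsum : (∑' k : ℕ, lam^k / (k.factorial : ℝ)) = Real.exp lam := by
    rw [Real.exp_eq_exp_ℝ, NormedSpace.exp_eq_tsum_div]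
  have hpow_tail : ∑' k : ℕ, lam^(k+1) / ((k+1).factorial : ℝ) = Real.exp lam - 1 := by
    have h := hpow_summable.tsum_eq_zero_add
    rw [hexp_tsum] at h
    simp only [pow_zero, Nat.factorial_zero, Nat.cast_one, div_one] at h
    linarith
  have hpo_tail : ∑' k : ℕ, po (k+1) ≤ lam := by
    have h1 : ∑' k : ℕ, po (k+1) = Real.exp (-lam) * (Real.exp lam - 1) := by
      rw [← hpow_tail, ← tsum_mul_left]
      congr 1
      funext k
      rw [hpo]
      ring
    rw [h1, Real.exp_neg]
    have hepos := Real.exp_pos lam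
    have h2 : (Real.exp lam)⁻¹ * (Real.exp lam - 1) = 1 - (Real.exp lam)⁻¹ := by
      field_simp
    rw [h2]
    have h3 : 1 - lam ≤ Real.exp (-lam) := by
      linarith [Real.add_one_le_exp (-lam)]
    rw [← Real.exp_neg]
    linarith
  have hpo_tail_summable : Summable (fun k => po (k+1)) :=
    (summable_nat_add_iff 1).2 hpo_summable
  -- first term
  have hg0 : g 0 + (P {ω | F ω ≠ 0}).toReal = 1 := by
    have h := measure_add_measure_compl (μ := P) (hAmeas 0)
    have hc : {ω | F ω = 0}ᶜ = {ω | F ω ≠ 0} := rfl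
    rw [hc, measure_univ] at h
    have := congrArg ENNReal.toReal h
    rwa [ENNReal.toReal_add (hfin _) (hfin _), ENNReal.toReal_one] at this
  have hpo0 : po 0 = Real.exp (-lam) := by simp [hpo]
  have h0 : |g 0 - po 0| ≤ (P {ω | F ω ≠ 0}).toReal + (1 - Real.exp (-lam)) := by
    have hg0le : g 0 ≤ 1 := by
      have := hg0; have := ENNReal.toReal_nonneg (a := P {ω | F ω ≠ 0}); linarith
    have hpole : po 0 ≤ 1 := by
      rw [hpo0, Real.exp_le_one_iff]; linarith
    rw [abs_le]
    constructor
    · rw [hpo0]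
      have : 0 ≤ g 0 := hg_nonneg 0
      linarith
    · rw [hpo0]
      linarith
  -- combine
  have habs_summable : Summable (fun k => |g k - po k|) := by
    apply Summable.of_nonneg_of_le (fun k => abs_nonneg _) (fun k => ?_)
      (hg_summable.add hpo_summable)
    calc |g k - po k| ≤ |g k| + |po k| := abs_sub _ _
      _ = g k + po k := by rw [abs_of_nonneg (hg_nonneg k), abs_of_nonneg (hpo_nonneg k)]
  rw [habs_summable.tsum_eq_zero_add]
  have htail_summable : Summable (fun k => |g (k+1) - po (k+1)|) :=
    (summable_nat_add_iff 1).2 habs_summable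
  have htail : ∑' k : ℕ, |g (k+1) - po (k+1)| ≤ (P {ω | F ω ≠ 0}).toReal + lam := by
    calc ∑' k : ℕ, |g (k+1) - po (k+1)|
        ≤ ∑' k : ℕ, (g (k+1) + po (k+1)) := by
          apply Summable.tsum_le_tsum _ htail_summable (hg_tail_summable.add hpo_tail_summable)
          intro k
          calc |g (k+1) - po (k+1)| ≤ |g (k+1)| + |po (k+1)| := abs_sub _ _
            _ = g (k+1) + po (k+1) := by
                rw [abs_of_nonneg (hg_nonneg _), abs_of_nonneg (hpo_nonneg _)]
      _ = (∑' k : ℕ, g (k+1)) + ∑' k : ℕ, po (k+1) :=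
          Summable.tsum_add hg_tail_summable hpo_tail_summable
      _ ≤ (P {ω | F ω ≠ 0}).toReal + lam := add_le_add hgtail' hpo_tail
  have hfinal : 1 - Real.exp (-lam) ≤ lam := by
    linarith [Real.add_one_le_exp (-lam)]
  linarith

set_option maxHeartbeats 2000000 in
/-- Theorem 3.1 (Poisson approximation): for `c > 0` and `α > 2`, with `p_N = c/N^α`,
cap radius `a_N = 2·arcsin √p_N`, `|𝓔_N|` the number of edges of `G_N` and
`λ_N = 2N(N-1)p_N(1-p_N)`, the total variation distance between the distribution of
`|𝓔_N|` and the Poisson distribution with parameter `λ_N` tends to `0` as `N → ∞`. -/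
theorem edges_poisson_approximation
    (c α : ℝ) (hc : 0 < c) (hα : 2 < α)
    {Ω : Type*} [MeasurableSpace Ω] (P : Measure Ω) [IsProbabilityMeasure P]
    (X : ℕ → Ω → EuclideanSpace ℝ (Fin 3))
    (hmeas : ∀ i, Measurable (X i))
    (hindep : ProbabilityTheory.iIndepFun X P)
    (hdist : ∀ i, Measure.map (X i) P = sphereUniform) :
    Filter.Tendsto (fun N : ℕ =>
      ∑' k : ℕ,
        |(P {ω | Set.ncard {q : ℕ × ℕ | q.1 < q.2 ∧ q.2 < N ∧
              angDist (X q.1 ω) (X q.2 ω) ≤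
                2 * (2 * Real.arcsin (Real.sqrt (c / (N : ℝ) ^ α)))} = k}).toReal -
          Real.exp (-(2 * (N : ℝ) * ((N : ℝ) - 1) * (c / (N : ℝ) ^ α) *
              (1 - c / (N : ℝ) ^ α))) *
            (2 * (N : ℝ) * ((N : ℝ) - 1) * (c / (N : ℝ) ^ α) *
              (1 - c / (N : ℝ) ^ α)) ^ k / (k.factorial : ℝ)|)
      Filter.atTop (nhds 0) := by
  classical
  have hpi := Real.pi_gt_three
  -- the dominating sequence
  set D : ℕ → ℝ := fun N => 14568 * ((N:ℝ)^2 * (c / (N:ℝ)^α)) with hD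
  -- p N → 0
  have hnat : Filter.Tendsto (fun N : ℕ => (N:ℝ)) Filter.atTop Filter.atTop :=
    tendsto_natCast_atTop_atTop
  have hptend : Filter.Tendsto (fun N : ℕ => c / (N:ℝ)^α) Filter.atTop (nhds 0) := by
    apply Filter.Tendsto.div_atTop (tendsto_const_nhds)
    exact (tendsto_rpow_atTop (by linarith : (0:ℝ) < α)).comp hnat
  have hev : ∀ᶠ N : ℕ in Filter.atTop, c / (N:ℝ)^α ≤ 1/100 := by
    have h := hptend.eventually (eventually_le_nhds (by norm_num : (0:ℝ) < 1/100))
    exact h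
  -- D → 0
  have hDtend : Filter.Tendsto D Filter.atTop (nhds 0) := by
    have hrpow : Filter.Tendsto (fun N : ℕ => (N:ℝ) ^ ((2:ℝ) - α))
        Filter.atTop (nhds 0) := by
      have h := (tendsto_rpow_neg_atTop (by linarith : (0:ℝ) < α - 2)).comp hnat
      simpa [Function.comp_def, neg_sub] using h
    have heq : ∀ᶠ N : ℕ in Filter.atTop,
        14568 * c * ((N:ℝ) ^ ((2:ℝ) - α)) = D N := by
      filter_upwards [Filter.eventually_ge_atTop 1] with N hN
      have hNpos : (0:ℝ) < N := by exact_mod_cast hN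
      have h2 : (N:ℝ) ^ ((2:ℝ) - α) = (N:ℝ)^(2:ℕ) / (N:ℝ)^α := by
        rw [Real.rpow_sub hNpos]
        congr 1
        rw [← Real.rpow_natCast (N:ℝ) 2]
        norm_num
      simp only [hD]
      rw [h2]
      field_simp
    have h := (hrpow.const_mul (14568 * c))
    rw [mul_zero] at h
    exact Filter.Tendsto.congr' heq h
  -- squeeze
  apply squeeze_zero' (Filter.Eventually.of_forall fun N => tsum_nonneg fun k => abs_nonneg _)
    _ hDtend
  filter_upwards [Filter.eventually_ge_atTop 1, hev] with N hN1 hpsmall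
  -- fix N; local notation
  have hNpos : (0:ℝ) < N := by exact_mod_cast hN1
  set p' : ℝ := c / (N:ℝ)^α with hp'
  have hppos : 0 < p' := div_pos hc (Real.rpow_pos_of_pos hNpos α)
  have hsq_pos : 0 < Real.sqrt p' := Real.sqrt_pos.2 hppos
  have hsqle : Real.sqrt p' ≤ 1/10 := by
    have h1 : Real.sqrt p' ≤ Real.sqrt (1/100) := Real.sqrt_le_sqrt hpsmall
    have h2 : Real.sqrt (1/100) = 1/10 := by
      rw [show (1/100:ℝ) = (1/10)^2 by norm_num, Real.sqrt_sq (by norm_num : (0:ℝ) ≤ 1/10)]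
    linarith
  set θ : ℝ := Real.arcsin (Real.sqrt p') with hθ
  have hθpos : 0 < θ := Real.arcsin_pos.2 hsq_pos
  have hsinθ : Real.sin θ = Real.sqrt p' :=
    Real.sin_arcsin (by linarith [Real.sqrt_nonneg p']) (by linarith)
  have hθle1 : θ ≤ 1 := by
    by_contra h
    push_neg at h
    have hmem1 : (1:ℝ) ∈ Set.Icc (-(π/2)) (π/2) := by
      constructor <;> [linarith; linarith]
    have hmemθ : θ ∈ Set.Icc (-(π/2)) (π/2) :=
      ⟨Real.neg_pi_div_two_le_arcsin _, Real.arcsin_le_pi_div_two _⟩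
    have h1 : Real.sin 1 < Real.sin θ := Real.strictMonoOn_sin hmem1 hmemθ h
    have h3 : (3:ℝ)/4 < Real.sin 1 := by
      have := Real.sin_gt_sub_cube one_pos
      norm_num at this
      linarith
    rw [hsinθ] at h1
    linarith
  have hθb : θ ≤ (4/3) * Real.sqrt p' := by
    have h := Real.sin_gt_sub_cube hθpos
    rw [hsinθ] at h
    nlinarith [sq_nonneg θ, hθpos, hθle1]
  set r : ℝ := 2 * (2 * Real.arcsin (Real.sqrt p')) with hrdef
  have hr4 : r = 4 * θ := by rw [hrdef, hθ]; ring
  have hrpos : 0 < r := by rw [hr4]; linarith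
  have hrle : r ≤ π/4 := by
    rw [hr4]
    have : θ ≤ (4/3) * (1/10) := le_trans hθb (by nlinarith)
    linarith
  have hr2 : 256 * r^2 ≤ 7282 * p' := by
    have hsq : (Real.sqrt p')^2 = p' := Real.sq_sqrt (le_of_lt hppos)
    rw [hr4]
    nlinarith [hθb, hθpos, hsq, hsq_pos]
  -- the edge-counting function
  set F : Ω → ℕ := fun ω => Set.ncard {q : ℕ × ℕ | q.1 < q.2 ∧ q.2 < N ∧
      angDist (X q.1 ω) (X q.2 ω) ≤ r} with hFdef
  set pairs : Finset (ℕ × ℕ) :=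
    (Finset.range N ×ˢ Finset.range N).filter (fun q => q.1 < q.2) with hpairs
  have hFmeas : Measurable F := by
    have hrep : F = fun ω => ∑ q ∈ pairs,
        if angDist (X q.1 ω) (X q.2 ω) ≤ r then 1 else 0 := by
      funext ω
      have hset : {q : ℕ × ℕ | q.1 < q.2 ∧ q.2 < N ∧ angDist (X q.1 ω) (X q.2 ω) ≤ r}
          = ↑(pairs.filter (fun q => angDist (X q.1 ω) (X q.2 ω) ≤ r)) := by
        ext q
        simp only [hpairs, Finset.coe_filter, Finset.mem_filter, Finset.mem_product,
          Finset.mem_range, Set.mem_setOf_eq]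
        constructor
        · rintro ⟨h1, h2, h3⟩; exact ⟨⟨⟨lt_trans h1 h2, h2⟩, h1⟩, h3⟩
        · rintro ⟨⟨⟨_, h2⟩, h1⟩, h3⟩; exact ⟨h1, h2, h3⟩
      show Set.ncard _ = _
      rw [hset, Set.ncard_coe_finset, Finset.card_filter]
    rw [hrep]
    apply Finset.measurable_sum
    intro q _
    have hinner : Measurable fun ω => (inner ℝ (X q.1 ω) (X q.2 ω) : ℝ) :=
      Measurable.inner (𝕜 := ℝ) (hmeas q.1) (hmeas q.2)
    have hmble : Measurable fun ω => angDist (X q.1 ω) (X q.2 ω) := by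
      unfold angDist
      exact Real.continuous_arccos.measurable.comp hinner
    exact Measurable.ite (measurableSet_le hmble measurable_const)
      measurable_const measurable_const
  -- union bound
  have hPF : (P {ω | F ω ≠ 0}).toReal ≤ (N:ℝ)^2 * (7282 * p') := by
    have hsub : {ω | F ω ≠ 0} ⊆
        ⋃ q ∈ pairs, {ω | Real.arccos ⟪X q.1 ω, X q.2 ω⟫ ≤ r} := by
      intro ω hω
      have hne := Set.nonempty_of_ncard_ne_zero hω
      obtain ⟨q, h1, h2, h3⟩ := hne
      have hqmem : q ∈ pairs := by
        simp only [hpairs, Finset.mem_filter, Finset.mem_product, Finset.mem_range]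
        exact ⟨⟨lt_trans h1 h2, h2⟩, h1⟩
      exact Set.mem_biUnion hqmem h3
    have hstep : P {ω | F ω ≠ 0} ≤ ENNReal.ofReal ((N:ℝ)^2 * (7282 * p')) := by
      calc P {ω | F ω ≠ 0}
          ≤ P (⋃ q ∈ pairs, {ω | Real.arccos ⟪X q.1 ω, X q.2 ω⟫ ≤ r}) := measure_mono hsub
        _ ≤ ∑ q ∈ pairs, P {ω | Real.arccos ⟪X q.1 ω, X q.2 ω⟫ ≤ r} :=
            measure_biUnion_finset_le _ _
        _ ≤ ∑ _q ∈ pairs, ENNReal.ofReal (7282 * p') := by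
            apply Finset.sum_le_sum
            intro q hq
            have hqlt : q.1 < q.2 := by
              simp only [hpairs, Finset.mem_filter] at hq
              exact hq.2
            have hind : ProbabilityTheory.IndepFun (X q.1) (X q.2) P :=
              hindep.indepFun (ne_of_lt hqlt)
            calc P {ω | Real.arccos ⟪X q.1 ω, X q.2 ω⟫ ≤ r}
                ≤ ENNReal.ofReal (256 * r^2) :=
                  pair_prob_bound P (X q.1) (X q.2) (hmeas q.1) (hmeas q.2)
                    (hdist q.1) (hdist q.2) hind hrpos hrle
              _ ≤ ENNReal.ofReal (7282 * p') := ENNReal.ofReal_le_ofReal hr2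
        _ = (pairs.card : ℝ≥0∞) * ENNReal.ofReal (7282 * p') := by
            rw [Finset.sum_const, nsmul_eq_mul]
        _ ≤ ((N*N : ℕ) : ℝ≥0∞) * ENNReal.ofReal (7282 * p') := by
            apply mul_le_mul_left
            have hcard : pairs.card ≤ N * N := by
              calc pairs.card ≤ (Finset.range N ×ˢ Finset.range N).card :=
                    Finset.card_filter_le _ _
                _ = N * N := by rw [Finset.card_product, Finset.card_range]
            exact_mod_cast hcard
        _ = ENNReal.ofReal ((N:ℝ)^2 * (7282 * p')) := by
            rw [← ENNReal.ofReal_natCast, ← ENNReal.ofReal_mul (by positivity)]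
            congr 1
            push_cast
            ring
    exact ENNReal.toReal_le_of_le_ofReal (by positivity) hstep
  -- lambda
  set lam : ℝ := 2 * (N : ℝ) * ((N : ℝ) - 1) * p' * (1 - p') with hlam
  have h1N : (1:ℝ) ≤ (N:ℝ) := by exact_mod_cast hN1
  have hp1 : p' ≤ 1 := by linarith
  have hlam0 : 0 ≤ lam := by
    rw [hlam]
    exact mul_nonneg (mul_nonneg (mul_nonneg (by linarith) (by linarith))
      (le_of_lt hppos)) (by linarith)
  have hlamle : lam ≤ 2 * (N:ℝ)^2 * p' := by
    rw [hlam]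
    have ha : 0 ≤ 2*(N:ℝ)*((N:ℝ)-1)*p' :=
      mul_nonneg (mul_nonneg (by linarith) (by linarith)) (le_of_lt hppos)
    have h7 : 2*(N:ℝ)*((N:ℝ)-1)*p'*(1-p') ≤ 2*(N:ℝ)*((N:ℝ)-1)*p' := by
      nlinarith [mul_nonneg ha (le_of_lt hppos)]
    have h8 : 2*(N:ℝ)*((N:ℝ)-1)*p' ≤ 2*(N:ℝ)^2*p' := by
      nlinarith [mul_nonneg (by linarith : (0:ℝ) ≤ 2*(N:ℝ)) (le_of_lt hppos)]
    linarith
  -- apply the TV bound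
  have htv := tv_bound_one_N P F hFmeas lam hlam0
  calc ∑' k : ℕ, |(P {ω | F ω = k}).toReal -
        Real.exp (-lam) * lam ^ k / (k.factorial : ℝ)|
      ≤ 2 * (P {ω | F ω ≠ 0}).toReal + 2 * lam := htv
    _ ≤ 2 * ((N:ℝ)^2 * (7282 * p')) + 2 * (2 * (N:ℝ)^2 * p') := by
        apply add_le_add
        · linarith
        · linarith
    _ = 14568 * ((N:ℝ)^2 * p') := by ring
    _ ≤ D N := le_of_eq rfl
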